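/- Let η > 0 and set g(x) = e^{−x} · 1_{[0,η)}(x). Then for every L ≥ 0 one has ∑_{k=1}^∞ (T^k g)(L) ≤ 2 (1 − e^{−min(L,η)}) (1 + 2 e L), where e is Euler's number. -/

import Mathlib

open MeasureTheory Real

/-- The kernel operator `(Tg)(x) = ∫₀ˣ (e^{−y} + e^{−(x−y)}) g(y) dy`. -/
noncomputable def T (g : ℝ → ℝ) : ℝ → ℝ :=
  fun x => ∫ y in (0:ℝ)..x, (Real.exp (-y) + Real.exp (-(x - y))) * g y

def II (f : ℝ → ℝ) : Prop := ∀ a b : ℝ, IntervalIntegrable f volume a b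

lemma II_of_continuous {f : ℝ → ℝ} (hf : Continuous f) : II f :=
  fun a b => hf.intervalIntegrable a b

lemma II.exp_neg_mul {f : ℝ → ℝ} (hf : II f) (a b : ℝ) :
    IntervalIntegrable (fun y => Real.exp (-y) * f y) volume a b :=
  (hf a b).continuousOn_mul (by fun_prop)

lemma II.exp_mul {f : ℝ → ℝ} (hf : II f) (a b : ℝ) :
    IntervalIntegrable (fun y => Real.exp y * f y) volume a b :=
  (hf a b).continuousOn_mul (by fun_prop)

lemma T_eq {f : ℝ → ℝ} (hf : II f) (x : ℝ) :
    T f x = (∫ y in (0:ℝ)..x, Real.exp (-y) * f y)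
      + Real.exp (-x) * ∫ y in (0:ℝ)..x, Real.exp y * f y := by
  have h1 := hf.exp_neg_mul 0 x
  have h2 := hf.exp_mul 0 x
  have : T f x = ∫ y in (0:ℝ)..x,
      (Real.exp (-y) * f y + Real.exp (-x) * (Real.exp y * f y)) := by
    unfold T
    apply intervalIntegral.integral_congr
    intro y _
    have h : Real.exp (-(x - y)) = Real.exp (-x) * Real.exp y := by
      rw [← Real.exp_add]; ring_nf
    dsimp only
    rw [h]; ring
  rw [this, intervalIntegral.integral_add h1 (h2.const_mul _),
    intervalIntegral.integral_const_mul]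

lemma T_cont {f : ℝ → ℝ} (hf : II f) : Continuous (T f) := by
  have : T f = fun x => (∫ y in (0:ℝ)..x, Real.exp (-y) * f y)
      + Real.exp (-x) * ∫ y in (0:ℝ)..x, Real.exp y * f y := funext (T_eq hf)
  rw [this]
  exact (intervalIntegral.continuous_primitive hf.exp_neg_mul 0).add
    ((continuous_exp.comp continuous_neg).mul
      (intervalIntegral.continuous_primitive hf.exp_mul 0))

lemma II.T {f : ℝ → ℝ} (hf : II f) : II (T f) := II_of_continuous (T_cont hf)

lemma T_mono {f h : ℝ → ℝ} (hf : II f) (hh : II h) {x : ℝ} (hx : 0 ≤ x)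
    (hle : ∀ y ∈ Set.Icc 0 x, f y ≤ h y) : T f x ≤ T h x := by
  unfold T
  apply intervalIntegral.integral_mono_on hx
    ((hf 0 x).continuousOn_mul (by fun_prop))
    ((hh 0 x).continuousOn_mul (by fun_prop))
  intro y hy
  exact mul_le_mul_of_nonneg_left (hle y hy) (by positivity)

lemma T_nonneg {f : ℝ → ℝ} {x : ℝ} (hx : 0 ≤ x)
    (h : ∀ y ∈ Set.Icc 0 x, 0 ≤ f y) : 0 ≤ T f x := by
  unfold T
  apply intervalIntegral.integral_nonneg hx
  intro y hy
  exact mul_nonneg (by positivity) (h y hy)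

lemma T_const_mul (c : ℝ) (f : ℝ → ℝ) (x : ℝ) :
    T (fun y => c * f y) x = c * T f x := by
  unfold T
  rw [← intervalIntegral.integral_const_mul]
  apply intervalIntegral.integral_congr
  intro y _; ring

lemma T_sum (f : ℕ → ℝ → ℝ) (hf : ∀ k, II (f k)) (n : ℕ) (x : ℝ) :
    T (fun y => ∑ k ∈ Finset.range n, f k y) x = ∑ k ∈ Finset.range n, T (f k) x := by
  unfold T
  rw [← intervalIntegral.integral_finset_sum
    (fun k _ => ((hf k) 0 x).continuousOn_mul (by fun_prop))]
  apply intervalIntegral.integral_congr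
  intro y _
  dsimp only
  rw [Finset.mul_sum]

lemma hdE (y : ℝ) : HasDerivAt (fun z : ℝ => Real.exp (-z)) (-Real.exp (-y)) y := by
  exact ((Real.hasDerivAt_exp (-y)).comp y ((hasDerivAt_id y).neg)).congr_deriv (by simp)

lemma hdE2 (y : ℝ) : HasDerivAt (fun z : ℝ => Real.exp (-z) ^ 2) (-2 * Real.exp (-y) ^ 2) y := by
  have := (hdE y).pow 2
  exact this.congr_deriv (by ring)

-- ∫₀ˣ e^{-y} e^{-y} dy = 1/2 - e^{-x}²/2
lemma int_A1 (x : ℝ) : ∫ y in (0:ℝ)..x, Real.exp (-y) * Real.exp (-y)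
    = 1/2 - Real.exp (-x) ^ 2 / 2 := by
  have key : ∀ y ∈ Set.uIcc (0:ℝ) x,
      HasDerivAt (fun z => -(Real.exp (-z) ^ 2) / 2) (Real.exp (-y) * Real.exp (-y)) y := by
    intro y _
    have := ((hdE2 y).neg).div_const 2
    exact this.congr_deriv (by ring)
  rw [intervalIntegral.integral_eq_sub_of_hasDerivAt key
    (Continuous.intervalIntegrable (by fun_prop) 0 x)]
  simp; ring

-- ∫₀ˣ e^{y} e^{-y} dy = x
lemma int_A2 (x : ℝ) : ∫ y in (0:ℝ)..x, Real.exp y * Real.exp (-y) = x := by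
  have : ∀ y ∈ Set.uIcc (0:ℝ) x, Real.exp y * Real.exp (-y) = (1:ℝ) := by
    intro y _; rw [← Real.exp_add]; simp
  rw [intervalIntegral.integral_congr this]; simp

-- ∫₀ˣ e^{-y}(3y-1+e^{-y}) dy = 5/2 - (3x+2)e^{-x} - e^{-x}²/2
lemma int_B1 (x : ℝ) : ∫ y in (0:ℝ)..x, Real.exp (-y) * (3*y - 1 + Real.exp (-y))
    = 5/2 - (3*x+2) * Real.exp (-x) - Real.exp (-x) ^ 2 / 2 := by
  have key : ∀ y ∈ Set.uIcc (0:ℝ) x,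
      HasDerivAt (fun z => -(3*z+2) * Real.exp (-z) - Real.exp (-z) ^ 2 / 2)
        (Real.exp (-y) * (3*y - 1 + Real.exp (-y))) y := by
    intro y _
    have h1 : HasDerivAt (fun z : ℝ => -(3*z+2)) (-3) y := by
      exact ((((hasDerivAt_id y).const_mul 3).add_const 2).neg).congr_deriv (by norm_num)
    have h2 := h1.mul (hdE y)
    have h3 := ((hdE y).pow 2).div_const 2
    have := h2.sub h3
    exact this.congr_deriv (by push_cast; ring)
  rw [intervalIntegral.integral_eq_sub_of_hasDerivAt key
    (Continuous.intervalIntegrable (by fun_prop) 0 x)]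
  simp; ring

-- ∫₀ˣ e^{y}(3y-1+e^{-y}) dy = (3x-4)eˣ + x + 4
lemma int_B2 (x : ℝ) : ∫ y in (0:ℝ)..x, Real.exp y * (3*y - 1 + Real.exp (-y))
    = (3*x-4) * Real.exp x + x + 4 := by
  have key : ∀ y ∈ Set.uIcc (0:ℝ) x,
      HasDerivAt (fun z => (3*z-4) * Real.exp z + z)
        (Real.exp y * (3*y - 1 + Real.exp (-y))) y := by
    intro y _
    have h1 : HasDerivAt (fun z : ℝ => 3*z-4) (3) y := by
      simpa using ((hasDerivAt_id y).const_mul 3).sub_const 4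
    have h2 := (h1.mul (Real.hasDerivAt_exp y)).add (hasDerivAt_id y)
    refine h2.congr_deriv ?_
    have h4 : Real.exp y * Real.exp (-y) = 1 := by rw [← Real.exp_add]; simp
    try simp only [id_eq]
    linear_combination (-1) * h4
  rw [intervalIntegral.integral_eq_sub_of_hasDerivAt key
    (Continuous.intervalIntegrable (by fun_prop) 0 x)]
  norm_num

-- ∫₀ˣ e^{-y}(-6+4e y+(8+2y)e^{-y}) dy = (6-4e(x+1))e^{-x} - (x+9/2)e^{-x}² - 3/2 + 4e
lemma int_C1 (x : ℝ) : ∫ y in (0:ℝ)..x,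
      Real.exp (-y) * (-6 + 4*Real.exp 1*y + (8+2*y) * Real.exp (-y))
    = (6 - 4*Real.exp 1*(x+1)) * Real.exp (-x) - (x+9/2) * Real.exp (-x) ^ 2
      - 3/2 + 4*Real.exp 1 := by
  set b : ℝ := 4*Real.exp 1 with hb
  have key : ∀ y ∈ Set.uIcc (0:ℝ) x,
      HasDerivAt (fun z => (6 - b*(z+1)) * Real.exp (-z) - (z+9/2) * Real.exp (-z) ^ 2)
        (Real.exp (-y) * (-6 + b*y + (8+2*y) * Real.exp (-y))) y := by
    intro y _
    have h1 : HasDerivAt (fun z : ℝ => 6 - b*(z+1)) (-b) y := by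
      simpa using (((hasDerivAt_id y).add_const 1).const_mul b).const_sub 6
    have h2 : HasDerivAt (fun z : ℝ => z + 9/2) 1 y := (hasDerivAt_id y).add_const _
    have h3 : HasDerivAt (fun z : ℝ => Real.exp (-z) ^ 2) (-2 * Real.exp (-y) ^ 2) y := by
      have := (hdE y).pow 2
      exact this.congr_deriv (by ring)
    have := (h1.mul (hdE y)).sub (h2.mul h3)
    exact this.congr_deriv (by ring)
  rw [intervalIntegral.integral_eq_sub_of_hasDerivAt key
    (Continuous.intervalIntegrable (by fun_prop) 0 x)]
  simp; ring

-- ∫₀ˣ e^{y}(-6+4e y+(8+2y)e^{-y}) dy = (-6+4e(x-1))eˣ + 8x + x² + 6 + 4e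
lemma int_C2 (x : ℝ) : ∫ y in (0:ℝ)..x,
      Real.exp y * (-6 + 4*Real.exp 1*y + (8+2*y) * Real.exp (-y))
    = (-6 + 4*Real.exp 1*(x-1)) * Real.exp x + 8*x + x^2 + 6 + 4*Real.exp 1 := by
  set b : ℝ := 4*Real.exp 1 with hb
  have key : ∀ y ∈ Set.uIcc (0:ℝ) x,
      HasDerivAt (fun z => (-6 + b*(z-1)) * Real.exp z + 8*z + z^2)
        (Real.exp y * (-6 + b*y + (8+2*y) * Real.exp (-y))) y := by
    intro y _
    have h1 : HasDerivAt (fun z : ℝ => -6 + b*(z-1)) (b) y := by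
      simpa using (((hasDerivAt_id y).sub_const 1).const_mul b).const_add (-6)
    have h2 := ((h1.mul (Real.hasDerivAt_exp y)).add
      ((hasDerivAt_id y).const_mul 8)).add ((hasDerivAt_id y).pow 2)
    refine h2.congr_deriv ?_
    have h4 : Real.exp y * Real.exp (-y) = 1 := by rw [← Real.exp_add]; simp
    try simp only [id_eq]
    push_cast
    linear_combination (-(8+2*y)) * h4
  rw [intervalIntegral.integral_eq_sub_of_hasDerivAt key
    (Continuous.intervalIntegrable (by fun_prop) 0 x)]
  simp; ring

noncomputable def gf (η : ℝ) : ℝ → ℝ :=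
  fun x => Real.exp (-x) * Set.indicator (Set.Ico (0:ℝ) η) 1 x


lemma gf_eq (η : ℝ) : gf η = Set.indicator (Set.Ico (0:ℝ) η) (fun y => Real.exp (-y)) := by
  funext y
  by_cases h : y ∈ Set.Ico (0:ℝ) η <;>
    simp [gf, Set.indicator_of_mem, Set.indicator_of_notMem, h]

lemma gf_nonneg (η : ℝ) (y : ℝ) : 0 ≤ gf η y := by
  rw [gf_eq]
  exact Set.indicator_nonneg (fun z _ => (Real.exp_pos _).le) y

lemma gf_le (η : ℝ) (y : ℝ) : gf η y ≤ Real.exp (-y) := by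
  rw [gf_eq]
  exact Set.indicator_le_self' (fun z _ => (Real.exp_pos _).le) y

lemma gf_zero_of_ge {η y : ℝ} (h : η ≤ y) : gf η y = 0 := by
  rw [gf_eq, Set.indicator_of_notMem]
  simp only [Set.mem_Ico, not_and, not_lt]
  intro _; exact h

lemma II_gf (η : ℝ) : II (gf η) := by
  intro a b
  rw [gf_eq, intervalIntegrable_iff]
  exact ((continuous_exp.comp continuous_neg).integrableOn_uIoc).indicator
    measurableSet_Ico

lemma ae_ne_eta (η : ℝ) : ∀ᵐ y : ℝ ∂volume, y ≠ η := by
  have : volume ({η} : Set ℝ) = 0 := measure_singleton η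
  rw [ae_iff]
  simpa using this

-- ∫₀ˣ e^{-y} g(y) dy = (1-e^{-η}²)/2 for η ≤ x (η ≥ 0)
lemma int_D1 {η x : ℝ} (hη : 0 < η) (hx : η ≤ x) :
    ∫ y in (0:ℝ)..x, Real.exp (-y) * gf η y = 1/2 - Real.exp (-η) ^ 2 / 2 := by
  have hi1 : IntervalIntegrable (fun y => Real.exp (-y) * gf η y) volume 0 η :=
    ((II_gf η) 0 η).continuousOn_mul (by fun_prop)
  have hi2 : IntervalIntegrable (fun y => Real.exp (-y) * gf η y) volume η x :=
    ((II_gf η) η x).continuousOn_mul (by fun_prop)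
  rw [← intervalIntegral.integral_add_adjacent_intervals hi1 hi2]
  have e2 : ∫ y in η..x, Real.exp (-y) * gf η y = 0 := by
    rw [intervalIntegral.integral_congr (g := fun _ => (0:ℝ)), intervalIntegral.integral_zero]
    intro y hy
    rw [Set.uIcc_of_le hx] at hy
    simp [gf_zero_of_ge hy.1]
  have e1 : ∫ y in (0:ℝ)..η, Real.exp (-y) * gf η y
      = ∫ y in (0:ℝ)..η, Real.exp (-y) * Real.exp (-y) := by
    apply intervalIntegral.integral_congr_ae
    filter_upwards [ae_ne_eta η] with y hne hy
    rw [Set.uIoc_of_le hη.le] at hy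
    have : y ∈ Set.Ico (0:ℝ) η := ⟨hy.1.le, lt_of_le_of_ne hy.2 hne⟩
    rw [gf_eq, Set.indicator_of_mem this]
  rw [e1, e2, int_A1]
  ring

-- ∫₀ˣ e^{y} g(y) dy = η for η ≤ x
lemma int_D2 {η x : ℝ} (hη : 0 < η) (hx : η ≤ x) :
    ∫ y in (0:ℝ)..x, Real.exp y * gf η y = η := by
  have hi1 : IntervalIntegrable (fun y => Real.exp y * gf η y) volume 0 η :=
    ((II_gf η) 0 η).continuousOn_mul (by fun_prop)
  have hi2 : IntervalIntegrable (fun y => Real.exp y * gf η y) volume η x :=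
    ((II_gf η) η x).continuousOn_mul (by fun_prop)
  rw [← intervalIntegral.integral_add_adjacent_intervals hi1 hi2]
  have e2 : ∫ y in η..x, Real.exp y * gf η y = 0 := by
    rw [intervalIntegral.integral_congr (g := fun _ => (0:ℝ)), intervalIntegral.integral_zero]
    intro y hy
    rw [Set.uIcc_of_le hx] at hy
    simp [gf_zero_of_ge hy.1]
  have e1 : ∫ y in (0:ℝ)..η, Real.exp y * gf η y
      = ∫ y in (0:ℝ)..η, Real.exp y * Real.exp (-y) := by
    apply intervalIntegral.integral_congr_ae
    filter_upwards [ae_ne_eta η] with y hne hy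
    rw [Set.uIoc_of_le hη.le] at hy
    have : y ∈ Set.Ico (0:ℝ) η := ⟨hy.1.le, lt_of_le_of_ne hy.2 hne⟩
    rw [gf_eq, Set.indicator_of_mem this]
  rw [e1, e2, int_A2]
  ring

noncomputable def W1 : ℝ → ℝ := fun x => 3*x - 1 + Real.exp (-x)

noncomputable def Pf : ℝ → ℝ := fun y => -6 + 4*Real.exp 1*y + (8+2*y) * Real.exp (-y)

lemma expE (x : ℝ) : Real.exp (-x) * Real.exp x = 1 := by rw [← Real.exp_add]; simp

lemma T_ghat (x : ℝ) : T (fun y => Real.exp (-y)) x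
    = 1/2 - Real.exp (-x)^2/2 + x * Real.exp (-x) := by
  rw [T_eq (II_of_continuous (by fun_prop)), int_A1, int_A2]
  ring

lemma T_W1 (x : ℝ) : T W1 x
    = -3/2 + 3*x + (2-2*x)*Real.exp (-x) - Real.exp (-x)^2/2 := by
  have h := expE x
  rw [show W1 = fun y => 3*y - 1 + Real.exp (-y) from rfl,
    T_eq (II_of_continuous (by fun_prop)), int_B1, int_B2]
  linear_combination (3*x - 4) * h

lemma T_Pf (x : ℝ) : T Pf x
    = 4*Real.exp 1*x - 15/2 + (12 + 8*x + x^2 - 4*Real.exp 1*x)*Real.exp (-x)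
      - (x+9/2)*Real.exp (-x)^2 := by
  have h := expE x
  rw [show Pf = fun y => -6 + 4*Real.exp 1*y + (8+2*y) * Real.exp (-y) from rfl,
    T_eq (II_of_continuous (by fun_prop)), int_C1, int_C2]
  linear_combination (-6 + 4*Real.exp 1*(x-1)) * h

lemma T_gf_of_ge {η x : ℝ} (hη : 0 < η) (hx : η ≤ x) :
    T (gf η) x = 1/2 - Real.exp (-η)^2/2 + η * Real.exp (-x) := by
  rw [T_eq (II_gf η), int_D1 hη hx, int_D2 hη hx]
  ring

lemma exp_S4 {x : ℝ} (hx : 0 ≤ x) :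
    (1 + x + x^2/2 + x^3/6 + x^4/24) * Real.exp (-x) ≤ 1 := by
  have h := Real.sum_le_exp_of_nonneg hx 5
  have hs : ∑ i ∈ Finset.range 5, x ^ i / (Nat.factorial i) =
      1 + x + x^2/2 + x^3/6 + x^4/24 := by
    norm_num [Finset.sum_range_succ, Nat.factorial]
    try ring
  rw [hs] at h
  rw [Real.exp_neg]
  rw [mul_inv_le_iff₀ (Real.exp_pos x)]
  simpa using h

lemma exp_sq_lb {x : ℝ} (hx2 : x ≤ 2) : (1 - x/2)^2 ≤ Real.exp (-x) := by
  have h1 : 1 - x/2 ≤ Real.exp (-(x/2)) := by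
    have := Real.add_one_le_exp (-(x/2)); linarith
  have h0 : 0 ≤ 1 - x/2 := by linarith
  have := mul_le_mul h1 h1 h0 (Real.exp_pos _).le
  calc (1 - x/2)^2 = (1-x/2)*(1-x/2) := by ring
    _ ≤ Real.exp (-(x/2)) * Real.exp (-(x/2)) := this
    _ = Real.exp (-x) := by rw [← Real.exp_add]; ring_nf

lemma ineq_C2 {x : ℝ} (hx : 0 ≤ x) :
    0 ≤ 1/2 + Real.exp (-x) * (-5 + (4*Real.exp 1 - 7)*x - x^2)
      + Real.exp (-x)^2 * (9/2 + x) := by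
  have he := Real.exp_one_gt_d9
  have ht0 : 0 < Real.exp (-x) := Real.exp_pos _
  set t := Real.exp (-x) with hT
  have htS : (1 + x + x^2/2 + x^3/6 + x^4/24) * t ≤ 1 := exp_S4 hx
  rcases le_or_gt x 2 with h2 | h2
  · have hl : (1 - x/2)^2 ≤ t := exp_sq_lb h2
    have hM : 0 ≤ (1 + x + x^2/2 + x^3/6 + x^4/24)/2
        - (1/2 - (4*Real.exp 1 - 21/2)*x + (7/8)*x^2 - x^3/4) := by
      nlinarith [mul_nonneg hx (sq_nonneg (x - 15/16)), he,
        pow_nonneg hx 4, mul_nonneg hx hx]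
    have hA : 0 ≤ (t - (1 - x/2)^2) * t * (9/2 + x) :=
      mul_nonneg (mul_nonneg (sub_nonneg.2 hl) ht0.le) (by linarith)
    have hB2 : 0 ≤ t * ((1 + x + x^2/2 + x^3/6 + x^4/24)/2
        - (1/2 - (4*Real.exp 1 - 21/2)*x + (7/8)*x^2 - x^3/4)) :=
      mul_nonneg ht0.le hM
    nlinarith [hA, hB2, htS]
  · have h2' : (0:ℝ) ≤ x - 2 := by linarith
    have hcube : (0:ℝ) ≤ (x-2)*(x-2)*(x-2) :=
      mul_nonneg (mul_nonneg h2' h2') h2'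
    have hquad : (0:ℝ) ≤ (x-2)*(x-2)*(x-2)*(x-2) := mul_nonneg hcube h2'
    have hA2 : 2*(5 - (4*Real.exp 1 - 7)*x + x^2) ≤ 1 + x + x^2/2 + x^3/6 + x^4/24 := by
      nlinarith [he, h2', sq_nonneg (x-2), hcube, hquad,
        mul_nonneg h2' (by nlinarith [he] : (0:ℝ) ≤ 8*Real.exp 1 - 47/3)]
    have hmul : (2*(5 - (4*Real.exp 1 - 7)*x + x^2)) * t
        ≤ (1 + x + x^2/2 + x^3/6 + x^4/24) * t :=
      mul_le_mul_of_nonneg_right hA2 ht0.le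
    nlinarith [mul_nonneg (mul_nonneg ht0.le ht0.le) (by linarith : (0:ℝ) ≤ 9/2 + x),
      hmul, htS]

lemma II_ghat : II (fun y => Real.exp (-y)) := II_of_continuous (by fun_prop)

-- supersolution inequality for W1
lemma sup1 {η : ℝ} (x : ℝ) (hx : 0 ≤ x) : T (gf η) x + T W1 x ≤ W1 x := by
  have h1 : T (gf η) x ≤ T (fun y => Real.exp (-y)) x :=
    T_mono (II_gf η) II_ghat hx (fun y _ => gf_le η y)
  have hE1 : 1 - x ≤ Real.exp (-x) := by
    have := Real.add_one_le_exp (-x); linarith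
  have hE0 : (0:ℝ) ≤ Real.exp (-x) := (Real.exp_pos _).le
  have key : 0 ≤ Real.exp (-x) * (x - 1 + Real.exp (-x)) :=
    mul_nonneg hE0 (by linarith)
  rw [T_ghat] at h1
  rw [T_W1]
  show _ ≤ 3*x - 1 + Real.exp (-x)
  nlinarith [h1, key]

-- supersolution inequality for W2 = q • Pf
lemma sup2 {η : ℝ} (hη : 0 < η) (x : ℝ) (hx : 0 ≤ x) :
    T (gf η) x + T (fun y => (1 - Real.exp (-η)) * Pf y) x
      ≤ (1 - Real.exp (-η)) * Pf x := by
  have hq : 0 < 1 - Real.exp (-η) := by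
    have : Real.exp (-η) < 1 := Real.exp_lt_one_iff.2 (by linarith)
    linarith
  have hE0 : (0:ℝ) < Real.exp (-x) := Real.exp_pos _
  rw [T_const_mul]
  -- C2 : key inequality
  have hC2 : 1 + (1+x) * Real.exp (-x) ≤ Pf x - T Pf x := by
    have := ineq_C2 hx
    rw [T_Pf]
    show _ ≤ -6 + 4*Real.exp 1*x + (8+2*x) * Real.exp (-x) - _
    nlinarith [this]
  have hmain : T (gf η) x ≤ (1 - Real.exp (-η)) * (1 + (1+x) * Real.exp (-x)) := by
    rcases le_or_gt x η with hxe | hxe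
    · have h1 : T (gf η) x ≤ T (fun y => Real.exp (-y)) x :=
        T_mono (II_gf η) II_ghat hx (fun y _ => gf_le η y)
      rw [T_ghat] at h1
      have hrr : Real.exp (-x) ^ 2 * Real.exp (2*x) = 1 := by
        rw [show Real.exp (-x)^2 = Real.exp (-x) * Real.exp (-x) from sq _,
          ← Real.exp_add, ← Real.exp_add, show -x + -x + 2*x = (0:ℝ) by ring,
          Real.exp_zero]
      have h2x : 2*x + 1 ≤ Real.exp (2*x) := by
        have := Real.add_one_le_exp (2*x); linarith
      have hsq : (1+2*x) * Real.exp (-x)^2 ≤ 1 := by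
        calc (1+2*x) * Real.exp (-x)^2 ≤ Real.exp (2*x) * Real.exp (-x)^2 :=
              mul_le_mul_of_nonneg_right (by linarith) (sq_nonneg _)
          _ = 1 := by rw [mul_comm]; exact hrr
      have hEq : 1 - Real.exp (-x) ≤ 1 - Real.exp (-η) := by
        have : Real.exp (-η) ≤ Real.exp (-x) := Real.exp_le_exp.2 (by linarith)
        linarith
      have step1 : T (gf η) x ≤ (1 - Real.exp (-x)) * (1 + (1+x) * Real.exp (-x)) := by
        nlinarith [h1, hsq]
      have hpos : 0 ≤ 1 + (1+x) * Real.exp (-x) := by positivity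
      calc T (gf η) x ≤ (1 - Real.exp (-x)) * (1 + (1+x) * Real.exp (-x)) := step1
        _ ≤ (1 - Real.exp (-η)) * (1 + (1+x) * Real.exp (-x)) :=
            mul_le_mul_of_nonneg_right hEq hpos
    · rw [T_gf_of_ge hη hxe.le]
      have hr0 : (0:ℝ) < Real.exp (-η) := Real.exp_pos _
      have hr1 : Real.exp (-η) ≤ 1 := Real.exp_le_one_iff.2 (by linarith)
      have hconst : 1/2 - Real.exp (-η)^2/2 ≤ 1 - Real.exp (-η) := by nlinarith [hr1, hr0]
      have hrexp : Real.exp (-η) * (1 + η) ≤ 1 := by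
        have h1 : 1 + η ≤ Real.exp η := by have := Real.add_one_le_exp η; linarith
        calc Real.exp (-η) * (1+η) ≤ Real.exp (-η) * Real.exp η :=
              mul_le_mul_of_nonneg_left h1 hr0.le
          _ = 1 := by rw [← Real.exp_add]; simp
      have heta : η ≤ (1 - Real.exp (-η)) * (1 + x) := by
        have h1 : η ≤ (1 - Real.exp (-η)) * (1 + η) := by nlinarith [hrexp]
        have h2 : (1 - Real.exp (-η)) * (1 + η) ≤ (1 - Real.exp (-η)) * (1 + x) :=
          mul_le_mul_of_nonneg_left (by linarith) hq.le
        linarith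
      have : η * Real.exp (-x) ≤ (1 - Real.exp (-η)) * (1+x) * Real.exp (-x) :=
        mul_le_mul_of_nonneg_right heta hE0.le
      nlinarith [this, hconst]
  have hfin : (1 - Real.exp (-η)) * (1 + (1+x) * Real.exp (-x))
      ≤ (1 - Real.exp (-η)) * (Pf x - T Pf x) :=
    mul_le_mul_of_nonneg_left hC2 hq.le
  nlinarith [hmain, hfin]

lemma W1_nonneg (x : ℝ) (hx : 0 ≤ x) : 0 ≤ W1 x := by
  have : 1 - x ≤ Real.exp (-x) := by have := Real.add_one_le_exp (-x); linarith
  show (0:ℝ) ≤ 3*x - 1 + Real.exp (-x)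
  linarith

lemma Pf_nonneg (x : ℝ) (hx : 0 ≤ x) : 0 ≤ Pf x := by
  have he := Real.exp_one_gt_d9
  have hE1 : 1 - x ≤ Real.exp (-x) := by have := Real.add_one_le_exp (-x); linarith
  have hE0 : (0:ℝ) ≤ Real.exp (-x) := (Real.exp_pos _).le
  show (0:ℝ) ≤ -6 + 4*Real.exp 1*x + (8+2*x) * Real.exp (-x)
  rcases le_or_gt x (3/2) with h | h
  · nlinarith [mul_nonneg (by linarith : (0:ℝ) ≤ 8+2*x) (by linarith : (0:ℝ) ≤ Real.exp (-x) - (1-x)),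
      mul_nonneg hx (by linarith : (0:ℝ) ≤ 3 - 2*x),
      mul_nonneg hx (by nlinarith [he] : (0:ℝ) ≤ 4*Real.exp 1 - 9)]
  · nlinarith [mul_nonneg (by linarith : (0:ℝ) ≤ 8+2*x) hE0, he]

lemma exp_inv_bound {L : ℝ} (hL : 0 ≤ L) : Real.exp (-L) * (1 + L) ≤ 1 := by
  have h1 : 1 + L ≤ Real.exp L := by have := Real.add_one_le_exp L; linarith
  calc Real.exp (-L) * (1+L) ≤ Real.exp (-L) * Real.exp L :=
        mul_le_mul_of_nonneg_left h1 (Real.exp_pos _).le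
    _ = 1 := by rw [← Real.exp_add]; simp

lemma W1_budget {L : ℝ} (hL : 0 ≤ L) :
    W1 L ≤ 2 * (1 - Real.exp (-L)) * (1 + 2 * Real.exp 1 * L) := by
  have he := Real.exp_one_gt_d9
  have h1 : Real.exp (-L) * (1 + L) ≤ 1 := exp_inv_bound hL
  have h2 : 1 - L ≤ Real.exp (-L) := by have := Real.add_one_le_exp (-L); linarith
  have he3 : (0:ℝ) ≤ 4*Real.exp 1 - 3 := by nlinarith [he]
  have c1 : 0 ≤ (4*Real.exp 1) * (1 - Real.exp (-L)*(1+L)) :=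
    mul_nonneg (by positivity) (by linarith)
  have c2 : 0 ≤ (4*Real.exp 1 - 3) * (L + Real.exp (-L) - 1) :=
    mul_nonneg he3 (by linarith)
  show 3*L - 1 + Real.exp (-L) ≤ _
  nlinarith [c1, c2]

lemma Pf_budget {L : ℝ} (hL : 0 ≤ L) : Pf L ≤ 2 + 4 * Real.exp 1 * L := by
  have h1 : Real.exp (-L) * (1 + L) ≤ 1 := exp_inv_bound hL
  have hE0 : (0:ℝ) ≤ Real.exp (-L) := (Real.exp_pos _).le
  show -6 + 4*Real.exp 1*L + (8+2*L) * Real.exp (-L) ≤ _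
  nlinarith [h1, mul_nonneg hL hE0]

lemma II_iter (η : ℝ) (k : ℕ) : II (T^[k] (gf η)) := by
  induction k with
  | zero => simpa using II_gf η
  | succ n ih => rw [Function.iterate_succ_apply']; exact ih.T

lemma iter_nonneg (η : ℝ) : ∀ k : ℕ, ∀ x : ℝ, 0 ≤ x → 0 ≤ T^[k+1] (gf η) x := by
  intro k
  induction k with
  | zero =>
    intro x hx
    simpa using T_nonneg hx (fun y _ => gf_nonneg η y)
  | succ n ih =>
    intro x hx
    rw [Function.iterate_succ_apply']
    exact T_nonneg hx (fun y hy => ih y hy.1)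

lemma sum_le_W (η : ℝ) (W : ℝ → ℝ) (hWC : Continuous W)
    (hW0 : ∀ x, 0 ≤ x → 0 ≤ W x)
    (hsup : ∀ x, 0 ≤ x → T (gf η) x + T W x ≤ W x) :
    ∀ n : ℕ, ∀ x : ℝ, 0 ≤ x →
      ∑ k ∈ Finset.range n, T^[k+1] (gf η) x ≤ W x := by
  intro n
  induction n with
  | zero => intro x hx; simpa using hW0 x hx
  | succ n ih =>
    intro x hx
    rw [Finset.sum_range_succ']
    have hrw : ∀ k : ℕ, T^[k+1+1] (gf η) x = T (T^[k+1] (gf η)) x := fun k => by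
      rw [Function.iterate_succ_apply']
    have hck : ∀ k : ℕ, Continuous (T^[k+1] (gf η)) := fun k => by
      rw [Function.iterate_succ_apply']; exact T_cont (II_iter η k)
    have hS : Continuous (fun y => ∑ k ∈ Finset.range n, T^[k+1] (gf η) y) :=
      continuous_finset_sum _ (fun k _ => (hck k))
    have e1 : ∑ k ∈ Finset.range n, T^[k+1+1] (gf η) x
        = T (fun y => ∑ k ∈ Finset.range n, T^[k+1] (gf η) y) x := by
      rw [T_sum (fun k => T^[k+1] (gf η)) (fun k => II_iter η (k+1)) n x]
      exact Finset.sum_congr rfl (fun k _ => hrw k)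
    have e2 : T^[0+1] (gf η) x = T (gf η) x := by
      simp [Function.iterate_one]
    rw [e1, e2]
    have hmono : T (fun y => ∑ k ∈ Finset.range n, T^[k+1] (gf η) y) x ≤ T W x :=
      T_mono (II_of_continuous hS) (II_of_continuous hWC) hx
        (fun y hy => ih y hy.1)
    linarith [hsup x hx, hmono]

theorem stmt_6 (η : ℝ) (hη : 0 < η) (L : ℝ) (hL : 0 ≤ L) :
    Summable (fun k : ℕ =>
      T^[k + 1] (fun x => Real.exp (-x) * Set.indicator (Set.Ico (0:ℝ) η) 1 x) L) ∧
    (∑' k : ℕ, T^[k + 1] (fun x => Real.exp (-x) * Set.indicator (Set.Ico (0:ℝ) η) 1 x) L) ≤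
      2 * (1 - Real.exp (-(min L η))) * (1 + 2 * Real.exp 1 * L) := by
  have hgf : (fun x => Real.exp (-x) * Set.indicator (Set.Ico (0:ℝ) η) 1 x) = gf η := rfl
  rw [hgf]
  have hnn : ∀ k : ℕ, 0 ≤ T^[k+1] (gf η) L := fun k => iter_nonneg η k L hL
  rcases le_or_gt L η with hc | hc
  · -- L ≤ η : use W1
    have hW1C : Continuous W1 := by unfold W1; fun_prop
    have hbd : ∀ n : ℕ, ∑ k ∈ Finset.range n, T^[k+1] (gf η) L ≤ W1 L :=
      fun n => sum_le_W η W1 hW1C W1_nonneg (fun x hx => sup1 x hx) n L hL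
    refine ⟨summable_of_sum_range_le hnn hbd, ?_⟩
    rw [min_eq_left hc]
    calc (∑' k : ℕ, T^[k+1] (gf η) L) ≤ W1 L :=
          Real.tsum_le_of_sum_range_le hnn hbd
      _ ≤ 2 * (1 - Real.exp (-L)) * (1 + 2 * Real.exp 1 * L) := W1_budget hL
  · -- η < L : use W2 = (1 - e^{-η}) • Pf
    have hq : 0 < 1 - Real.exp (-η) := by
      have : Real.exp (-η) < 1 := Real.exp_lt_one_iff.2 (by linarith)
      linarith
    have hW2C : Continuous (fun y => (1 - Real.exp (-η)) * Pf y) := by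
      unfold Pf; fun_prop
    have hW20 : ∀ x, 0 ≤ x → 0 ≤ (1 - Real.exp (-η)) * Pf x :=
      fun x hx => mul_nonneg hq.le (Pf_nonneg x hx)
    have hbd : ∀ n : ℕ, ∑ k ∈ Finset.range n, T^[k+1] (gf η) L
        ≤ (1 - Real.exp (-η)) * Pf L :=
      fun n => sum_le_W η _ hW2C hW20 (fun x hx => sup2 hη x hx) n L hL
    refine ⟨summable_of_sum_range_le hnn hbd, ?_⟩
    rw [min_eq_right hc.le]
    calc (∑' k : ℕ, T^[k+1] (gf η) L) ≤ (1 - Real.exp (-η)) * Pf L :=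
          Real.tsum_le_of_sum_range_le hnn hbd
      _ ≤ (1 - Real.exp (-η)) * (2 + 4 * Real.exp 1 * L) :=
          mul_le_mul_of_nonneg_left (Pf_budget hL) hq.le
      _ = 2 * (1 - Real.exp (-η)) * (1 + 2 * Real.exp 1 * L) := by ring
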